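/- Suppose a finite transition system (Q, Σ, δ) simulates a continuous system F : X × U × D → X via a partition map P : Q → 2^X, meaning: the sets P(q) partition X, and for all x ∈ X, u ∈ U, d ∈ D, if x ∈ P(q) and F(x, u, d) ∈ P(q′), then q′ ∈ δ(q, u). If Q^I ⊆ Q is a controlled invariant set of the finite system (i.e., for every q ∈ Q^I there exists u ∈ Σ with δ(q, u) ⊆ Q^I), then the set Ĩ = ⋃_{q ∈ Q^I} P(q) is a robust controlled invariant set of the continuous system: for every x ∈ Ĩ there exists u ∈ U such that F(x, u, d) ∈ Ĩ for all d ∈ D. -/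
import Mathlib


def RobustControlledInvariant {Z V W : Type*} (f : Z → V → W → Z) (C : Set Z) : Prop :=
  ∀ z ∈ C, ∃ v : V, ∀ w : W, f z v w ∈ C

theorem abstraction_invariant_concretization {X U D Q : Type*} [Finite Q] [Finite U]
    (F : X → U → D → X) (P : Q → Set X) (δ : Q → U → Set Q)
    (hcover : (⋃ q : Q, P q) = Set.univ)
    (hdisj : ∀ qa qb : Q, qa ≠ qb → P qa ∩ P qb = ∅)
    (hsim : ∀ (x : X) (u : U) (d : D) (q q' : Q),
      x ∈ P q → F x u d ∈ P q' → q' ∈ δ q u)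
    (QI : Set Q) (hQI : ∀ q ∈ QI, ∃ u : U, δ q u ⊆ QI) :
    RobustControlledInvariant F (⋃ q ∈ QI, P q) := by
  intro x hx
  rw [Set.mem_iUnion₂] at hx
  obtain ⟨q, hq, hxq⟩ := hx
  obtain ⟨u, hu⟩ := hQI q hq
  refine ⟨u, fun d => ?_⟩
  have : F x u d ∈ ⋃ q : Q, P q := by rw [hcover]; trivial
  obtain ⟨q', hq'⟩ := Set.mem_iUnion.mp this
  exact Set.mem_iUnion₂.mpr ⟨q', hu (hsim x u d q q' hxq hq'), hq'⟩
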